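/- arXiv:2409.10301 — 3 statements merged into one kernel-verified Lean document; each statement's English description precedes it below -/
import Mathlib

section
/- Let Σ and Σ' be real symmetric positive definite n×n matrices, μ ∈ ℝ^n, q > 0, and define H(x) = q·xᵀΣx − μᵀx. Set x* = (1/(2q))·Σ⁻¹μ and x' = (1/(2q))·(Σ')⁻¹μ. Then H(x') − H(x*) = (1/(4q))·μᵀ[(Σ')⁻¹(Σ − Σ')Σ⁻¹(Σ − Σ')(Σ')⁻¹]μ. -/
open Matrix

/-- Exact expression for the gap between the Markowitz objective evaluated at the minimizer
`x' = (1/(2q))·(Σ')⁻¹μ` of the decomposed problem and at the true minimizer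
`x* = (1/(2q))·Σ⁻¹μ`:
`H(x') − H(x*) = (1/(4q))·μᵀ[(Σ')⁻¹(Σ − Σ')Σ⁻¹(Σ − Σ')(Σ')⁻¹]μ`. -/
theorem markowitz_gap_formula {n : ℕ} (S S' : Matrix (Fin n) (Fin n) ℝ)
    (hS : S.PosDef) (hS' : S'.PosDef)
    (μ : Fin n → ℝ) (q : ℝ) (hq : 0 < q)
    (H : (Fin n → ℝ) → ℝ) (hH : ∀ x, H x = q * (x ⬝ᵥ S *ᵥ x) - μ ⬝ᵥ x)
    (xstar x' : Fin n → ℝ)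
    (hxstar : xstar = (1 / (2 * q)) • (S⁻¹ *ᵥ μ))
    (hx' : x' = (1 / (2 * q)) • (S'⁻¹ *ᵥ μ)) :
    H x' - H xstar
      = (1 / (4 * q)) * (μ ⬝ᵥ (S'⁻¹ * (S - S') * S⁻¹ * (S - S') * S'⁻¹) *ᵥ μ) := by
  have hdS : IsUnit S.det := isUnit_iff_ne_zero.mpr hS.det_pos.ne'
  have hdS' : IsUnit S'.det := isUnit_iff_ne_zero.mpr hS'.det_pos.ne'
  have hSsymm : Sᵀ = S := by simpa [Matrix.IsSymm] using hS.1
  have hS'symm : S'ᵀ = S' := by simpa [Matrix.IsSymm] using hS'.1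
  have hAsymm : (S⁻¹)ᵀ = S⁻¹ := by rw [Matrix.transpose_nonsing_inv, hSsymm]
  have hBsymm : (S'⁻¹)ᵀ = S'⁻¹ := by rw [Matrix.transpose_nonsing_inv, hS'symm]
  -- matrix identity
  have key : S'⁻¹ * (S - S') * S⁻¹ * (S - S') * S'⁻¹
      = S'⁻¹ * (S * S'⁻¹) - S'⁻¹ - S'⁻¹ + S⁻¹ := by
    simp only [Matrix.sub_mul, Matrix.mul_sub, Matrix.mul_assoc,
      Matrix.mul_nonsing_inv _ hdS, Matrix.mul_nonsing_inv _ hdS',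
      Matrix.nonsing_inv_mul_cancel_left _ _ hdS,
      Matrix.nonsing_inv_mul_cancel_left _ _ hdS',
      Matrix.mul_nonsing_inv_cancel_left _ _ hdS,
      Matrix.mul_nonsing_inv_cancel_left _ _ hdS',
      Matrix.mul_one]
    abel
  -- dot product rewriting helper
  have flip : ∀ (M : Matrix (Fin n) (Fin n) ℝ), Mᵀ = M → ∀ w : Fin n → ℝ,
      (M *ᵥ μ) ⬝ᵥ w = μ ⬝ᵥ (M *ᵥ w) := by
    intro M hM w
    rw [Matrix.dotProduct_mulVec, ← Matrix.mulVec_transpose, hM]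
  have hBq : (S'⁻¹ *ᵥ μ) ⬝ᵥ (S *ᵥ (S'⁻¹ *ᵥ μ)) = μ ⬝ᵥ ((S'⁻¹ * (S * S'⁻¹)) *ᵥ μ) := by
    rw [flip _ hBsymm, Matrix.mulVec_mulVec, Matrix.mulVec_mulVec, Matrix.mul_assoc]
  have hAq : (S⁻¹ *ᵥ μ) ⬝ᵥ (S *ᵥ (S⁻¹ *ᵥ μ)) = μ ⬝ᵥ (S⁻¹ *ᵥ μ) := by
    rw [flip _ hAsymm, Matrix.mulVec_mulVec, Matrix.nonsing_inv_mul _ hdS,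
      Matrix.one_mulVec]
  rw [key, hH, hH, hx', hxstar]
  simp only [Matrix.mulVec_smul, smul_dotProduct, dotProduct_smul, smul_eq_mul,
    Matrix.sub_mulVec, Matrix.add_mulVec, dotProduct_sub, dotProduct_add,
    hBq, hAq]
  field_simp
  ring
end

section
/- Let Σ and Σ' be real symmetric positive definite n×n matrices, μ ∈ ℝ^n, q > 0, and define H(x) = q·xᵀΣx − μᵀx. Set x* = (1/(2q))·Σ⁻¹μ and x' = (1/(2q))·(Σ')⁻¹μ. Then |H(x*) − H(x')| ≤ (1/(4q))·‖μ‖²·‖(Σ')⁻¹‖²·‖Σ − Σ'‖²·‖Σ⁻¹‖, where ‖·‖ denotes the Euclidean norm on vectors and the spectral (operator) norm on matrices. -/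
open Matrix
open scoped Matrix.Norms.L2Operator

open scoped RealInnerProductSpace in
private lemma dot_abs_le_norm {n : ℕ} (x y : Fin n → ℝ) :
    |x ⬝ᵥ y| ≤ ‖(EuclideanSpace.equiv (Fin n) ℝ).symm x‖ *
      ‖(EuclideanSpace.equiv (Fin n) ℝ).symm y‖ := by
  have h := abs_real_inner_le_norm ((EuclideanSpace.equiv (Fin n) ℝ).symm x)
    ((EuclideanSpace.equiv (Fin n) ℝ).symm y)
  have h2 : ⟪((EuclideanSpace.equiv (Fin n) ℝ).symm x : EuclideanSpace ℝ (Fin n)),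
      (EuclideanSpace.equiv (Fin n) ℝ).symm y⟫ = x ⬝ᵥ y := by
    simp [EuclideanSpace.inner_eq_star_dotProduct, dotProduct, mul_comm]
  rwa [h2] at h

private lemma mulVec_norm_le {n : ℕ} (A : Matrix (Fin n) (Fin n) ℝ) (x : Fin n → ℝ) :
    ‖(EuclideanSpace.equiv (Fin n) ℝ).symm (A *ᵥ x)‖ ≤
      ‖A‖ * ‖(EuclideanSpace.equiv (Fin n) ℝ).symm x‖ :=
  A.l2_opNorm_mulVec ((EuclideanSpace.equiv (Fin n) ℝ).symm x)

/-- Norm bound on the gap between the Markowitz objective at the true minimizer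
`x* = (1/(2q))·Σ⁻¹μ` and at the minimizer `x' = (1/(2q))·(Σ')⁻¹μ` of the decomposed problem:
`|H(x*) − H(x')| ≤ (1/(4q))·‖μ‖²·‖(Σ')⁻¹‖²·‖Σ − Σ'‖²·‖Σ⁻¹‖`,
with the Euclidean norm on vectors and the spectral (ℓ²→ℓ² operator) norm on matrices. -/
theorem markowitz_gap_bound {n : ℕ} (S S' : Matrix (Fin n) (Fin n) ℝ)
    (hS : S.PosDef) (hS' : S'.PosDef)
    (μ : Fin n → ℝ) (q : ℝ) (hq : 0 < q)
    (H : (Fin n → ℝ) → ℝ) (hH : ∀ x, H x = q * (x ⬝ᵥ S *ᵥ x) - μ ⬝ᵥ x)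
    (xstar x' : Fin n → ℝ)
    (hxstar : xstar = (1 / (2 * q)) • (S⁻¹ *ᵥ μ))
    (hx' : x' = (1 / (2 * q)) • (S'⁻¹ *ᵥ μ)) :
    |H xstar - H x'|
      ≤ (1 / (4 * q)) * ‖(EuclideanSpace.equiv (Fin n) ℝ).symm μ‖ ^ 2
          * ‖S'⁻¹‖ ^ 2 * ‖S - S'‖ ^ 2 * ‖S⁻¹‖ := by
  have hdS : IsUnit S.det := hS.det_pos.ne'.isUnit
  have hdS' : IsUnit S'.det := hS'.det_pos.ne'.isUnit
  set a : Fin n → ℝ := S⁻¹ *ᵥ μ with ha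
  set b : Fin n → ℝ := S'⁻¹ *ᵥ μ with hb
  have hSa : S *ᵥ a = μ := by
    rw [ha, Matrix.mulVec_mulVec, Matrix.mul_nonsing_inv _ hdS, Matrix.one_mulVec]
  have hS'b : S' *ᵥ b = μ := by
    rw [hb, Matrix.mulVec_mulVec, Matrix.mul_nonsing_inv _ hdS', Matrix.one_mulVec]
  have hsymmS : Sᵀ = S := by exact (by simpa using hS.1 : S.IsSymm)
  set d : Fin n → ℝ := b - a with hd
  have hSd : S *ᵥ d = (S - S') *ᵥ b := by
    rw [hd, Matrix.mulVec_sub, Matrix.sub_mulVec, hSa, hS'b]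
  have hdform : d = S'⁻¹ *ᵥ ((S - S') *ᵥ a) := by
    have h1 : S' *ᵥ d = (S - S') *ᵥ a := by
      rw [hd, Matrix.mulVec_sub, Matrix.sub_mulVec, hS'b, hSa]
    rw [← h1, Matrix.mulVec_mulVec, Matrix.nonsing_inv_mul _ hdS', Matrix.one_mulVec]
  -- scalar identities
  have haa : a ⬝ᵥ (S *ᵥ a) = μ ⬝ᵥ a := by rw [hSa, dotProduct_comm]
  have hba : b ⬝ᵥ (S *ᵥ a) = μ ⬝ᵥ b := by rw [hSa, dotProduct_comm]
  have hab : a ⬝ᵥ (S *ᵥ b) = μ ⬝ᵥ b := by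
    rw [Matrix.dotProduct_mulVec, ← Matrix.mulVec_transpose, hsymmS, hSa]
  -- the gap identity
  have hgap : H x' - H xstar = (1 / (4 * q)) * (d ⬝ᵥ ((S - S') *ᵥ b)) := by
    rw [← hSd, hH, hH, hxstar, hx']
    simp only [hd, Matrix.mulVec_smul, smul_dotProduct, dotProduct_smul,
      Matrix.mulVec_sub, sub_dotProduct, dotProduct_sub, smul_eq_mul,
      haa, hba, hab]
    field_simp
    ring
  -- norm bounds
  have hna : ‖(EuclideanSpace.equiv (Fin n) ℝ).symm a‖ ≤
      ‖S⁻¹‖ * ‖(EuclideanSpace.equiv (Fin n) ℝ).symm μ‖ := mulVec_norm_le _ _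
  have hnb : ‖(EuclideanSpace.equiv (Fin n) ℝ).symm b‖ ≤
      ‖S'⁻¹‖ * ‖(EuclideanSpace.equiv (Fin n) ℝ).symm μ‖ := mulVec_norm_le _ _
  have hnd : ‖(EuclideanSpace.equiv (Fin n) ℝ).symm d‖ ≤
      ‖S'⁻¹‖ * (‖S - S'‖ * (‖S⁻¹‖ * ‖(EuclideanSpace.equiv (Fin n) ℝ).symm μ‖)) := by
    rw [hdform]
    refine (mulVec_norm_le _ _).trans ?_
    refine mul_le_mul_of_nonneg_left ?_ (norm_nonneg _)
    refine (mulVec_norm_le _ _).trans ?_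
    exact mul_le_mul_of_nonneg_left hna (norm_nonneg _)
  have hnSb : ‖(EuclideanSpace.equiv (Fin n) ℝ).symm ((S - S') *ᵥ b)‖ ≤
      ‖S - S'‖ * (‖S'⁻¹‖ * ‖(EuclideanSpace.equiv (Fin n) ℝ).symm μ‖) := by
    refine (mulVec_norm_le _ _).trans ?_
    exact mul_le_mul_of_nonneg_left hnb (norm_nonneg _)
  have hdot : |d ⬝ᵥ ((S - S') *ᵥ b)| ≤
      (‖S'⁻¹‖ * (‖S - S'‖ * (‖S⁻¹‖ * ‖(EuclideanSpace.equiv (Fin n) ℝ).symm μ‖))) *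
      (‖S - S'‖ * (‖S'⁻¹‖ * ‖(EuclideanSpace.equiv (Fin n) ℝ).symm μ‖)) := by
    refine (dot_abs_le_norm _ _).trans ?_
    exact mul_le_mul hnd hnSb (norm_nonneg _) (by positivity)
  have habs : |H xstar - H x'| = (1 / (4 * q)) * |d ⬝ᵥ ((S - S') *ᵥ b)| := by
    rw [abs_sub_comm, hgap, abs_mul, abs_of_pos (by positivity : (0:ℝ) < 1 / (4 * q))]
  rw [habs]
  have h4q : (0:ℝ) < 1 / (4 * q) := by positivity
  calc (1 / (4 * q)) * |d ⬝ᵥ ((S - S') *ᵥ b)|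
      ≤ (1 / (4 * q)) * ((‖S'⁻¹‖ * (‖S - S'‖ * (‖S⁻¹‖ * ‖(EuclideanSpace.equiv (Fin n) ℝ).symm μ‖))) *
        (‖S - S'‖ * (‖S'⁻¹‖ * ‖(EuclideanSpace.equiv (Fin n) ℝ).symm μ‖))) :=
        mul_le_mul_of_nonneg_left hdot h4q.le
    _ = (1 / (4 * q)) * ‖(EuclideanSpace.equiv (Fin n) ℝ).symm μ‖ ^ 2
          * ‖S'⁻¹‖ ^ 2 * ‖S - S'‖ ^ 2 * ‖S⁻¹‖ := by ring
end

section
/- (Gap between optimal direct and decomposed solutions.) Let Σ be a real symmetric positive definite n×n matrix, let Σ' be a block-diagonal real matrix with K ≥ 1 symmetric positive definite diagonal blocks Σ'₁, …, Σ'_K each of whose smallest eigenvalue is at least Γ > 0, let μ ∈ ℝ^n, q > 0, and define H(x) = q·xᵀΣx − μᵀx. Let x* = (1/(2q))·Σ⁻¹μ be the global minimizer of H and x' = (1/(2q))·(Σ')⁻¹μ be the global minimizer of the decomposed objective H'(x) = q·xᵀΣ'x − μᵀx. Then |H(x*) − H(x')| ≤ (‖Σ⁻¹‖·‖μ‖²/(4q))·(K·‖Σ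 − Σ'‖/Γ)², where ‖·‖ denotes the Euclidean norm on vectors and the spectral norm on matrices. -/
open Matrix
open scoped Matrix.Norms.L2Operator

private lemma bd_dot {K : ℕ} {m : Fin K → ℕ}
    (M : ∀ k : Fin K, Matrix (Fin (m k)) (Fin (m k)) ℝ)
    (x y : ((k : Fin K) × Fin (m k)) → ℝ) :
    x ⬝ᵥ (Matrix.blockDiagonal' M *ᵥ y)
      = ∑ k, (fun i => x ⟨k, i⟩) ⬝ᵥ (M k *ᵥ fun j => y ⟨k, j⟩) := by
  simp only [dotProduct, mulVec, ← Finset.univ_sigma_univ, Finset.sum_sigma,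
    blockDiagonal'_apply']
  refine Finset.sum_congr rfl fun k _ => ?_
  refine Finset.sum_congr rfl fun i _ => ?_
  congr 1
  rw [Finset.sum_eq_single k]
  · simp
  · intro l _ hl; simp [Ne.symm hl]
  · simp

private lemma bd_posDef {K : ℕ} {m : Fin K → ℕ}
    (B : ∀ k : Fin K, Matrix (Fin (m k)) (Fin (m k)) ℝ) (hB : ∀ k, (B k).PosDef) :
    (Matrix.blockDiagonal' B).PosDef := by
  refine posDef_iff_dotProduct_mulVec.mpr ⟨?_, ?_⟩
  · rw [Matrix.IsHermitian, Matrix.blockDiagonal'_conjTranspose]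
    exact congrArg _ (funext fun k => (hB k).isHermitian)
  · intro x hx
    rw [star_trivial, bd_dot]
    obtain ⟨p, hp⟩ := Function.ne_iff.mp hx
    refine Finset.sum_pos' (fun k _ => ?_) ⟨p.1, Finset.mem_univ _, ?_⟩
    · simpa using (hB k).posSemidef.dotProduct_mulVec_nonneg (fun i => x ⟨k, i⟩)
    · have hne : (fun i => x ⟨p.1, i⟩) ≠ 0 := fun h => hp (by simpa using congrFun h p.2)
      simpa using (hB p.1).dotProduct_mulVec_pos hne

private lemma herm_dot {n : Type*} [Fintype n] {A : Matrix n n ℝ} (hA : A.IsHermitian)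
    (x y : n → ℝ) : (A *ᵥ x) ⬝ᵥ y = x ⬝ᵥ (A *ᵥ y) := by
  have hT : Aᵀ = A := by rw [← conjTranspose_eq_transpose_of_trivial, hA.eq]
  rw [dotProduct_mulVec x A y, ← mulVec_transpose, hT, dotProduct_comm]

private lemma dot_eq_inner {n : Type*} [Fintype n] (x y : n → ℝ) :
    x ⬝ᵥ y = inner ℝ ((EuclideanSpace.equiv n ℝ).symm x) ((EuclideanSpace.equiv n ℝ).symm y) := by
  rw [EuclideanSpace.inner_eq_star_dotProduct]
  simp [dotProduct, mul_comm]

private lemma dot_le_norms {n : Type*} [Fintype n] (x y : n → ℝ) :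
    x ⬝ᵥ y ≤ ‖(EuclideanSpace.equiv n ℝ).symm x‖ * ‖(EuclideanSpace.equiv n ℝ).symm y‖ := by
  rw [dot_eq_inner]; exact real_inner_le_norm _ _

set_option maxHeartbeats 1000000 in
/-- Theorem 1 (Gap between optimal direct and decomposed solutions): if `Σ` is symmetric positive
definite, `Σ' = Diag(Σ'₁, …, Σ'_K)` is block diagonal with `K ≥ 1` symmetric positive definite
blocks whose eigenvalues are all at least `Γ > 0`, `x* = (1/(2q))·Σ⁻¹μ` minimizes
`H(x) = q·xᵀΣx − μᵀx` and `x' = (1/(2q))·(Σ')⁻¹μ` minimizes the decomposed objective, then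
`|H(x*) − H(x')| ≤ (‖Σ⁻¹‖·‖μ‖²/(4q))·(K·‖Σ − Σ'‖/Γ)²`. -/
theorem markowitz_decomposition_gap_bound {K : ℕ} (hK : 1 ≤ K) (m : Fin K → ℕ)
    (S : Matrix ((k : Fin K) × Fin (m k)) ((k : Fin K) × Fin (m k)) ℝ) (hS : S.PosDef)
    (B : ∀ k : Fin K, Matrix (Fin (m k)) (Fin (m k)) ℝ)
    (hB : ∀ k, (B k).PosDef)
    (Γ : ℝ) (hΓ : 0 < Γ)
    (hEig : ∀ k, (B k - Γ • (1 : Matrix (Fin (m k)) (Fin (m k)) ℝ)).PosSemidef)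
    (S' : Matrix ((k : Fin K) × Fin (m k)) ((k : Fin K) × Fin (m k)) ℝ)
    (hS' : S' = Matrix.blockDiagonal' B)
    (μ : ((k : Fin K) × Fin (m k)) → ℝ) (q : ℝ) (hq : 0 < q)
    (H : (((k : Fin K) × Fin (m k)) → ℝ) → ℝ)
    (hH : ∀ x, H x = q * (x ⬝ᵥ S *ᵥ x) - μ ⬝ᵥ x)
    (xstar x' : ((k : Fin K) × Fin (m k)) → ℝ)
    (hxstar : xstar = (1 / (2 * q)) • (S⁻¹ *ᵥ μ))
    (hx' : x' = (1 / (2 * q)) • (S'⁻¹ *ᵥ μ)) :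
    |H xstar - H x'|
      ≤ (‖S⁻¹‖ * ‖(EuclideanSpace.equiv ((k : Fin K) × Fin (m k)) ℝ).symm μ‖ ^ 2 / (4 * q))
          * (K * ‖S - S'‖ / Γ) ^ 2 := by
  have hSd : IsUnit S.det := isUnit_iff_ne_zero.mpr hS.det_pos.ne'
  have hS'pd : S'.PosDef := hS' ▸ bd_posDef B hB
  have hS'd : IsUnit S'.det := isUnit_iff_ne_zero.mpr hS'pd.det_pos.ne'
  set e := (EuclideanSpace.equiv ((k : Fin K) × Fin (m k)) ℝ).symm with he
  set v := S⁻¹ *ᵥ μ with hv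
  set u := S'⁻¹ *ᵥ μ with hu
  have hSv : S *ᵥ v = μ := by rw [hv, mulVec_mulVec, mul_nonsing_inv _ hSd, one_mulVec]
  have hS'u : S' *ᵥ u = μ := by rw [hu, mulVec_mulVec, mul_nonsing_inv _ hS'd, one_mulVec]
  set w := S *ᵥ u - μ with hwdef
  have hw : (S - S') *ᵥ u = w := by rw [sub_mulVec, hS'u]
  set a := μ ⬝ᵥ v with ha
  set b := u ⬝ᵥ (S *ᵥ u) with hb
  set d := μ ⬝ᵥ u with hd
  set c := 1 / (2 * q) with hc
  have hHx : H xstar = q * (c * (c * a)) - c * a := by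
    rw [hH, hxstar, mulVec_smul, hSv, smul_dotProduct, dotProduct_smul, dotProduct_smul,
      smul_eq_mul, smul_eq_mul, smul_eq_mul, dotProduct_comm v μ]
  have hHx' : H x' = q * (c * (c * b)) - c * d := by
    rw [hH, hx', mulVec_smul, smul_dotProduct, dotProduct_smul, dotProduct_smul,
      smul_eq_mul, smul_eq_mul, smul_eq_mul]
  set t := w ⬝ᵥ (S⁻¹ *ᵥ w) with htdef
  have hSinvw : S⁻¹ *ᵥ w = u - v := by
    rw [hwdef, mulVec_sub, mulVec_mulVec, nonsing_inv_mul _ hSd, one_mulVec, hv]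
  have ht : t = b - 2 * d + a := by
    have h1 : (S *ᵥ u) ⬝ᵥ u = b := dotProduct_comm _ _
    have h2 : (S *ᵥ u) ⬝ᵥ v = d := by
      rw [herm_dot hS.isHermitian, hSv, dotProduct_comm u μ]
    rw [htdef, hSinvw, hwdef, sub_dotProduct, dotProduct_sub, dotProduct_sub, h1, h2]
    ring
  have hgap : H xstar - H x' = -(t / (4 * q)) := by
    rw [hHx, hHx', ht, hc]
    field_simp
    ring
  have ht0 : 0 ≤ t := by simpa using hS.inv.posSemidef.dotProduct_mulVec_nonneg w
  have hwn : ‖e w‖ ≤ ‖S - S'‖ * ‖e u‖ := by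
    rw [← hw]
    exact Matrix.l2_opNorm_mulVec (S - S') (e u)
  have htn : t ≤ ‖S⁻¹‖ * ‖e w‖ ^ 2 := by
    have h1 : t ≤ ‖e w‖ * ‖e (S⁻¹ *ᵥ w)‖ := dot_le_norms _ _
    have h2 : ‖e (S⁻¹ *ᵥ w)‖ ≤ ‖S⁻¹‖ * ‖e w‖ := Matrix.l2_opNorm_mulVec S⁻¹ (e w)
    nlinarith [norm_nonneg (e w), norm_nonneg (e (S⁻¹ *ᵥ w))]
  have hd2 : u ⬝ᵥ (S' *ᵥ u) = d := by rw [hS'u, dotProduct_comm]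
  have huu : u ⬝ᵥ u = ‖e u‖ ^ 2 := by
    rw [dot_eq_inner, real_inner_self_eq_norm_sq]
  have hquad : Γ * (u ⬝ᵥ u) ≤ d := by
    rw [← hd2, hS', bd_dot]
    have huu' : u ⬝ᵥ u = ∑ k, (fun i => u ⟨k, i⟩) ⬝ᵥ (fun j => u ⟨k, j⟩) := by
      simp [dotProduct, ← Finset.univ_sigma_univ, Finset.sum_sigma]
    rw [huu', Finset.mul_sum]
    refine Finset.sum_le_sum fun k _ => ?_
    have h := (hEig k).dotProduct_mulVec_nonneg (fun i => u ⟨k, i⟩)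
    rw [star_trivial, sub_mulVec, dotProduct_sub, smul_mulVec, one_mulVec,
      dotProduct_smul, smul_eq_mul] at h
    linarith
  have hΓu : Γ * ‖e u‖ ≤ ‖e μ‖ := by
    rw [huu] at hquad
    have hdle : d ≤ ‖e μ‖ * ‖e u‖ := dot_le_norms μ u
    rcases eq_or_lt_of_le (norm_nonneg (e u)) with h0 | h0
    · rw [← h0]; simp [norm_nonneg]
    · nlinarith
  rw [hgap, abs_neg, abs_of_nonneg (div_nonneg ht0 (by positivity)), div_mul_eq_mul_div]
  gcongr ?_ / _
  have hKr : (1 : ℝ) ≤ (K : ℝ) := by exact_mod_cast hK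
  have hnE := norm_nonneg (S - S')
  have hnμ := norm_nonneg (e μ)
  have hnS := norm_nonneg (S⁻¹)
  have hnw := norm_nonneg (e w)
  have hun : ‖e u‖ ≤ ‖e μ‖ / Γ := (le_div_iff₀' hΓ).mpr hΓu
  have hwn2 : ‖e w‖ ≤ ‖S - S'‖ * (‖e μ‖ / Γ) :=
    hwn.trans (mul_le_mul_of_nonneg_left hun hnE)
  have h1 : ‖S - S'‖ / Γ ≤ (K : ℝ) * ‖S - S'‖ / Γ := by
    gcongr
    exact le_mul_of_one_le_left hnE hKr
  have h2 : (‖S - S'‖ / Γ) ^ 2 ≤ ((K : ℝ) * ‖S - S'‖ / Γ) ^ 2 :=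
    pow_le_pow_left₀ (div_nonneg hnE hΓ.le) h1 2
  have h3 : ‖e w‖ ^ 2 ≤ (‖S - S'‖ * (‖e μ‖ / Γ)) ^ 2 := pow_le_pow_left₀ hnw hwn2 2
  calc t ≤ ‖S⁻¹‖ * ‖e w‖ ^ 2 := htn
    _ ≤ ‖S⁻¹‖ * (‖S - S'‖ * (‖e μ‖ / Γ)) ^ 2 := mul_le_mul_of_nonneg_left h3 hnS
    _ = ‖S⁻¹‖ * ‖e μ‖ ^ 2 * (‖S - S'‖ / Γ) ^ 2 := by ring
    _ ≤ ‖S⁻¹‖ * ‖e μ‖ ^ 2 * ((K : ℝ) * ‖S - S'‖ / Γ) ^ 2 :=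
        mul_le_mul_of_nonneg_left h2 (by positivity)
end
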